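/- arXiv:0811.2951 — 6 statements merged into one kernel-verified Lean document; each statement's English description precedes it below -/
import Mathlib

section
/- Let ξ' be an endomorphism of a Lie algebra 𝔤 such that there exists a linear map α with [ξ', ad_x] = ad_{α(x)} for all x. Then ξ' preserves every ideal 𝔄 of 𝔤 satisfying [𝔄,𝔄] = 𝔄. -/
theorem xi_preserves_perfect_ideal {k : Type*} [Field k] [CharZero k] {L : Type*} [LieRing L]
    [LieAlgebra k L] (ξ α : L →ₗ[k] L)
    (h : ∀ x : L, ξ ∘ₗ LieAlgebra.ad k L x - LieAlgebra.ad k L x ∘ₗ ξ = LieAlgebra.ad k L (α x))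
    (A : LieIdeal k L) (hA : ⁅A, A⁆ = A) :
    ∀ x ∈ A, ξ x ∈ A := by
  intro x hx
  rw [← hA] at hx
  rw [← LieSubmodule.mem_toSubmodule, LieSubmodule.lieIdeal_oper_eq_linear_span'] at hx
  induction hx using Submodule.span_induction with
  | mem m hm =>
    obtain ⟨a, ha, b, hb, rfl⟩ := hm
    have := congrArg (fun f : L →ₗ[k] L => f b) (h a)
    simp only [LinearMap.sub_apply, LinearMap.comp_apply, LieAlgebra.ad_apply] at this
    have hξ : ξ ⁅a, b⁆ = ⁅α a, b⁆ + ⁅a, ξ b⁆ := by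
      rw [← this]; abel
    rw [hξ]
    exact A.add_mem (A.lie_mem hb) (lie_mem_left k L A a (ξ b) ha)
  | zero => simp
  | add y z _ _ hy hz => rw [map_add]; exact A.add_mem hy hz
  | smul c y _ hy => rw [map_smul]; exact A.smul_mem c hy
end

section
/- Let 𝔤 be a Lie algebra and ψ : 𝔤* → 𝔤 a linear map satisfying ψ∘ad*_x = ad_x∘ψ for all x ∈ 𝔤 and ad*_{ψ(f)} g = ad*_{ψ(g)} f for all f,g ∈ 𝔤*. Then [ψ(f), ψ(g)] = 0 for all f,g ∈ 𝔤*, i.e. the image of ψ is an abelian subalgebra, and moreover ψ(ad*_{ψ(g)} f) = 0 for all f,g. -/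
variable (k : Type*) [Field k] [CharZero k] (L : Type*) [LieRing L] [LieAlgebra k L]

/-- The coadjoint action: `(coad x f) y = -f ⁅x, y⁆`. -/
def coad (x : L) : Module.Dual k L →ₗ[k] Module.Dual k L :=
  -(LieAlgebra.ad k L x).dualMap

variable {k L}

theorem image_psi_abelian [FiniteDimensional k L] (ψ : Module.Dual k L →ₗ[k] L)
    (hψ : ∀ (x : L) (f : Module.Dual k L), ψ (coad k L x f) = ⁅x, ψ f⁆)
    (hcomm : ∀ f g : Module.Dual k L, coad k L (ψ f) g = coad k L (ψ g) f) :
    (∀ f g : Module.Dual k L, ⁅ψ f, ψ g⁆ = 0) ∧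
      (∀ f g : Module.Dual k L, ψ (coad k L (ψ g) f) = 0) := by
  have key : ∀ f g : Module.Dual k L, ⁅ψ f, ψ g⁆ = 0 := by
    intro f g
    have h1 : ⁅ψ f, ψ g⁆ = ⁅ψ g, ψ f⁆ := by
      rw [← hψ, ← hψ, hcomm]
    have h2 : (2 : k) • ⁅ψ f, ψ g⁆ = 0 := by
      rw [two_smul]
      nth_rewrite 2 [h1]
      rw [← lie_skew (ψ f) (ψ g)]
      abel
    have h3 : (2 : k) ≠ 0 := two_ne_zero
    rcases smul_eq_zero.mp h2 with h | h
    · exact absurd h h3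
    · exact h
  refine ⟨key, fun f g => ?_⟩
  rw [hψ, key]
end

section
/- Let 𝔤 be a non-abelian Lie algebra and ψ : 𝔤* → 𝔤 a linear map with ψ∘ad*_x = ad_x∘ψ for all x and ad*_{ψ(f)} g = ad*_{ψ(g)} f for all f,g ∈ 𝔤*. Then ψ is not bijective. -/
variable (k : Type*) [Field k] [CharZero k] (L : Type*) [LieRing L] [LieAlgebra k L]

variable {k L}

theorem psi_not_bijective [FiniteDimensional k L] (hna : ¬ ∀ x y : L, ⁅x, y⁆ = 0)
    (ψ : Module.Dual k L →ₗ[k] L)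
    (hψ : ∀ (x : L) (f : Module.Dual k L), ψ (coad k L x f) = ⁅x, ψ f⁆)
    (hcomm : ∀ f g : Module.Dual k L, coad k L (ψ f) g = coad k L (ψ g) f) :
    ¬ Function.Bijective ψ := by
  intro hb
  apply hna
  have hc : ∀ (f g : Module.Dual k L) (z : L), g ⁅ψ f, z⁆ = f ⁅ψ g, z⁆ := by
    intro f g z
    have := congrArg (fun φ => φ z) (hcomm f g)
    simp only [coad, LinearMap.neg_apply, LinearMap.dualMap_apply, LieAlgebra.ad_apply,
      Pi.neg_apply, neg_inj] at this
    exact this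
  intro x y
  obtain ⟨f, rfl⟩ := hb.2 x
  obtain ⟨g, rfl⟩ := hb.2 y
  rw [← Module.forall_dual_apply_eq_zero_iff k]
  intro h
  have h1 := hc f h (ψ g)
  have h2 := hc g f (ψ h)
  have h3 := hc h g (ψ f)
  have hskew1 : f ⁅ψ h, ψ g⁆ = - f ⁅ψ g, ψ h⁆ := by rw [← lie_skew, map_neg]
  have hskew2 : g ⁅ψ f, ψ h⁆ = - g ⁅ψ h, ψ f⁆ := by rw [← lie_skew, map_neg]
  have hskew3 : h ⁅ψ g, ψ f⁆ = - h ⁅ψ f, ψ g⁆ := by rw [← lie_skew, map_neg]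
  have : (2 : k) * h ⁅ψ f, ψ g⁆ = 0 := by
    linear_combination h1 + hskew1 - h2 - hskew2 + h3 + hskew3
  simpa using this
end

section
/- If 𝔤 is a semisimple Lie algebra, then every linear map ψ : 𝔤* → 𝔤 satisfying ψ∘ad*_x = ad_x∘ψ for all x ∈ 𝔤 and ad*_{ψ(f)} g = ad*_{ψ(g)} f for all f,g ∈ 𝔤* is identically zero. -/
variable (k : Type*) [Field k] [CharZero k] (L : Type*) [LieRing L] [LieAlgebra k L]

variable {k L}

theorem psi_eq_zero_of_semisimple [FiniteDimensional k L] [LieAlgebra.IsSemisimple k L]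
    (ψ : Module.Dual k L →ₗ[k] L)
    (hψ : ∀ (x : L) (f : Module.Dual k L), ψ (coad k L x f) = ⁅x, ψ f⁆)
    (hcomm : ∀ f g : Module.Dual k L, coad k L (ψ f) g = coad k L (ψ g) f) :
    ψ = 0 := by
  -- key: brackets of elements in the range of ψ vanish
  have key : ∀ f g : Module.Dual k L, ⁅ψ f, ψ g⁆ = 0 := by
    intro f g
    have h1 : ⁅ψ f, ψ g⁆ = ⁅ψ g, ψ f⁆ := by
      rw [← hψ (ψ f) g, ← hψ (ψ g) f, hcomm]
    have h2 : ⁅ψ f, ψ g⁆ = -⁅ψ f, ψ g⁆ :=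
      h1.trans (lie_skew (ψ g) (ψ f)).symm
    have h3 : (2 : k) • ⁅ψ f, ψ g⁆ = 0 := by
      rw [two_smul]
      nth_rewrite 1 [h2]
      abel
    rcases smul_eq_zero.mp h3 with h | h
    · exact absurd h two_ne_zero
    · exact h
  -- the range of ψ is an abelian ideal
  let I : LieIdeal k L :=
    { LinearMap.range ψ with
      lie_mem := by
        rintro x m hm
        obtain ⟨f, rfl⟩ := hm
        exact ⟨coad k L x f, hψ x f⟩ }
  have habel : IsLieAbelian I := by
    constructor
    rintro ⟨a, f, rfl⟩ ⟨b, g, rfl⟩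
    ext
    exact key f g
  have hbot : I = ⊥ :=
    ((LieAlgebra.hasTrivialRadical_iff_no_abelian_ideals k L).mp inferInstance) I habel
  ext f
  have : ψ f ∈ I := ⟨f, rfl⟩
  rw [hbot] at this
  simpa using this
end

section
/- Let 𝔤 be a Lie algebra, 𝔤* its dual with the coadjoint 𝔤-action, and 𝒟 = 𝔤 ⋉ 𝔤* the semidirect product Lie algebra with bracket [(x,f),(y,g)] = ([x,y], ad*_x g − ad*_y f). A linear map φ : 𝒟 → 𝒟, written φ(x,f) = (φ₁₁(x)+φ₂₁(f), φ₁₂(x)+φ₂₂(f)), is a derivation of 𝒟 if and only if: (1) φ₁₁ is a derivation of 𝔤; (2) φ₁₂([x,y]) = ad*_x φ₁₂(y) − ad*_y φ₁₂(x) for all x,y; (3) φ₂₁∘ad*_x = ad_x∘φ₂₁ for all x; (4) φ₂₂∘ad*_x − ad*_x∘φ₂₂ = ad*_{φ₁₁(x)} for all x; and (5) ad*_{φ₂₁(f)} g = ad*_{φ₂₁(g)} f for all f,g ∈ 𝔤*. -/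
variable (k : Type*) [Field k] [CharZero k] (L : Type*) [LieRing L] [LieAlgebra k L]

/-- The bracket of the cotangent Lie algebra `𝒟 = 𝔤 ⋉ 𝔤*`. -/
def Dbracket (u v : L × Module.Dual k L) : L × Module.Dual k L :=
  (⁅u.1, v.1⁆, coad k L u.1 v.2 - coad k L v.1 u.2)

variable {k L}

lemma coad_apply (x : L) (f : Module.Dual k L) (y : L) : coad k L x f y = -f ⁅x, y⁆ := rfl

lemma coad_add (x y : L) : coad k L (x + y) = coad k L x + coad k L y := by
  ext f z; simp [coad_apply, add_lie]; abel

lemma coad_zero : coad k L (0 : L) = 0 := by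
  ext f z; simp [coad_apply]

theorem derivation_of_D_characterization [FiniteDimensional k L]
    (φ₁₁ : L →ₗ[k] L) (φ₁₂ : L →ₗ[k] Module.Dual k L)
    (φ₂₁ : Module.Dual k L →ₗ[k] L) (φ₂₂ : Module.Dual k L →ₗ[k] Module.Dual k L) :
    (∀ u v : L × Module.Dual k L,
        (fun p : L × Module.Dual k L => (φ₁₁ p.1 + φ₂₁ p.2, φ₁₂ p.1 + φ₂₂ p.2))
            (Dbracket k L u v) =
          Dbracket k L ((fun p : L × Module.Dual k L =>
              (φ₁₁ p.1 + φ₂₁ p.2, φ₁₂ p.1 + φ₂₂ p.2)) u) v +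
            Dbracket k L u ((fun p : L × Module.Dual k L =>
              (φ₁₁ p.1 + φ₂₁ p.2, φ₁₂ p.1 + φ₂₂ p.2)) v)) ↔
      ((∀ x y : L, φ₁₁ ⁅x, y⁆ = ⁅φ₁₁ x, y⁆ + ⁅x, φ₁₁ y⁆) ∧
        (∀ x y : L, φ₁₂ ⁅x, y⁆ = coad k L x (φ₁₂ y) - coad k L y (φ₁₂ x)) ∧
        (∀ (x : L) (f : Module.Dual k L), φ₂₁ (coad k L x f) = ⁅x, φ₂₁ f⁆) ∧
        (∀ (x : L) (f : Module.Dual k L),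
          φ₂₂ (coad k L x f) - coad k L x (φ₂₂ f) = coad k L (φ₁₁ x) f) ∧
        (∀ f g : Module.Dual k L, coad k L (φ₂₁ f) g = coad k L (φ₂₁ g) f)) := by
  constructor
  · intro h
    refine ⟨fun x y => ?_, fun x y => ?_, fun x f => ?_, fun x f => ?_, fun f g => ?_⟩
    · have := congrArg Prod.fst (h (x, 0) (y, 0))
      simpa [Dbracket, coad_zero] using this
    · have := congrArg Prod.snd (h (x, 0) (y, 0))
      simp [Dbracket, coad_zero] at this
      rw [this]; abel
    · have := congrArg Prod.fst (h (x, 0) (0, f))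
      simpa [Dbracket, coad_zero] using this
    · have := congrArg Prod.snd (h (x, 0) (0, f))
      simp [Dbracket, coad_zero] at this
      rw [this]; abel
    · have := congrArg Prod.snd (h (0, f) (0, g))
      simp [Dbracket, coad_zero] at this
      rw [eq_comm, add_neg_eq_zero] at this
      exact this
  · rintro ⟨h1, h2, h3, h4, h5⟩ ⟨x, f⟩ ⟨y, g⟩
    have e4x := h4 x g
    have e4y := h4 y f
    refine Prod.ext ?_ ?_
    · simp only [Dbracket, map_sub, h1, h3, Prod.fst_add, add_lie, lie_add]
      rw [← lie_skew (φ₂₁ f) y]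
      abel
    · simp only [Dbracket, map_sub, map_add, h2, coad_add, Prod.snd_add]
      simp only [LinearMap.add_apply]
      have := h5 f g
      have a := h4 x g
      have b := h4 y f
      rw [sub_eq_iff_eq_add] at a b
      rw [a, b, this]
      abel
end

section
/- Let 𝔤 be a Lie algebra, 𝒟 = 𝔤 ⋉ 𝔤* its cotangent Lie algebra. If β : 𝔤 → 𝔤* is a 1-cocycle for the coadjoint action and ψ : 𝔤* → 𝔤 satisfies ψ∘ad*_x = ad_x∘ψ for all x and ad*_{ψ(f)}g = ad*_{ψ(g)}f for all f,g, then ψ∘β is a derivation of 𝔤 and β∘ψ satisfies [β∘ψ, ad*_x] = −ad*_{(ψ∘β)(x)} for all x ∈ 𝔤. -/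
variable (k : Type*) [Field k] [CharZero k] (L : Type*) [LieRing L] [LieAlgebra k L]

variable {k L}

theorem psi_beta_der_and_beta_psi [FiniteDimensional k L]
    (β : L →ₗ[k] Module.Dual k L)
    (hβ : ∀ x y : L, β ⁅x, y⁆ = coad k L x (β y) - coad k L y (β x))
    (ψ : Module.Dual k L →ₗ[k] L)
    (hψ : ∀ (x : L) (f : Module.Dual k L), ψ (coad k L x f) = ⁅x, ψ f⁆)
    (hcomm : ∀ f g : Module.Dual k L, coad k L (ψ f) g = coad k L (ψ g) f) :
    (∀ x y : L, (ψ ∘ₗ β) ⁅x, y⁆ = ⁅(ψ ∘ₗ β) x, y⁆ + ⁅x, (ψ ∘ₗ β) y⁆) ∧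
      (∀ (x : L) (f : Module.Dual k L),
        (β ∘ₗ ψ) (coad k L x f) - coad k L x ((β ∘ₗ ψ) f) = -(coad k L (ψ (β x)) f)) := by
  constructor
  · intro x y
    simp only [LinearMap.comp_apply, hβ, map_sub, hψ]
    rw [← lie_skew y (ψ (β x))]
    abel
  · intro x f
    simp only [LinearMap.comp_apply, hψ, hβ, hcomm f (β x)]
    abel
end
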